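/- Let N ≥ 1 and let I : Fin N → ℕ be a family of positive dimensions, and suppose X : (∀ k : Fin N, Fin (I k)) → ℝ is in tensor-train (TT) format with ranks R : Fin (N+1) → ℕ (R 0 = 1, R N = 1) and cores G. Then for every n with 1 ≤ n ≤ N−1, the matrix rank of the n-th unfolding X⟨n⟩ of X is at most R n. -/

import Mathlib

noncomputable section

/-- The entry at multi-index `i` of the tensor train with ranks `R` and cores `G`. -/
def ttEntry {N : ℕ} (I : Fin N → ℕ) (R : Fin (N + 1) → ℕ)
    (G : ∀ k : Fin N, Fin (R k.castSucc) → Fin (I k) → Fin (R k.succ) → ℝ)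
    (i : ∀ k : Fin N, Fin (I k)) : ℝ :=
  ∑ r : ∀ j : Fin (N + 1), Fin (R j),
    ∏ k : Fin N, G k (r k.castSucc) (i k) (r k.succ)

/-- The `n`-th unfolding of an order-`N` tensor `X`: the matrix whose rows are indexed by
the index tuples `(i k)_{k < n}`, whose columns are indexed by the tuples `(i k)_{k ≥ n}`,
and whose entries are the corresponding entries of `X`. -/
def unfold {N : ℕ} (I : Fin N → ℕ) (X : (∀ k : Fin N, Fin (I k)) → ℝ) (n : ℕ) :
    Matrix (∀ k : {k : Fin N // (k : ℕ) < n}, Fin (I k.1))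
           (∀ k : {k : Fin N // n ≤ (k : ℕ)}, Fin (I k.1)) ℝ :=
  fun row col =>
    X (fun k => if h : (k : ℕ) < n then row ⟨k, h⟩ else col ⟨k, not_lt.mp h⟩)

section Aux
variable {N : ℕ} (R : Fin (N + 1) → ℕ) (n : Fin (N + 1))

def buildL (m : Fin (R n)) (l : ∀ j : {j : Fin (N+1) // (j : ℕ) < (n : ℕ)}, Fin (R j.1))
    (j : Fin (N+1)) (hj : (j : ℕ) ≤ (n : ℕ)) : Fin (R j) :=
  if h : (j : ℕ) < (n : ℕ) then l ⟨j, h⟩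
  else Fin.cast (congrArg R (Fin.ext (le_antisymm (not_lt.1 h) hj))) m

def buildR (m : Fin (R n)) (rt : ∀ j : {j : Fin (N+1) // (n : ℕ) < (j : ℕ)}, Fin (R j.1))
    (j : Fin (N+1)) (hj : (n : ℕ) ≤ (j : ℕ)) : Fin (R j) :=
  if h : (n : ℕ) < (j : ℕ) then rt ⟨j, h⟩
  else Fin.cast (congrArg R (Fin.ext (le_antisymm hj (not_lt.1 h)))) m

def buildFull (m : Fin (R n)) (l : ∀ j : {j : Fin (N+1) // (j : ℕ) < (n : ℕ)}, Fin (R j.1))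
    (rt : ∀ j : {j : Fin (N+1) // (n : ℕ) < (j : ℕ)}, Fin (R j.1))
    (j : Fin (N+1)) : Fin (R j) :=
  if h : (j : ℕ) < (n : ℕ) then l ⟨j, h⟩
  else if h' : (n : ℕ) < (j : ℕ) then rt ⟨j, h'⟩
  else Fin.cast (congrArg R (Fin.ext (le_antisymm (not_lt.1 h) (not_lt.1 h')))) m

lemma buildFull_le (m l rt) (j : Fin (N+1)) (hj : (j : ℕ) ≤ (n : ℕ)) :
    buildFull R n m l rt j = buildL R n m l j hj := by
  by_cases h : (j : ℕ) < (n : ℕ)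
  · simp [buildFull, buildL, h]
  · have h' : ¬ (n : ℕ) < (j : ℕ) := not_lt.2 hj
    apply Fin.ext
    simp [buildFull, buildL, h, h']

lemma buildFull_ge (m l rt) (j : Fin (N+1)) (hj : (n : ℕ) ≤ (j : ℕ)) :
    buildFull R n m l rt j = buildR R n m rt j hj := by
  by_cases h' : (n : ℕ) < (j : ℕ)
  · have h : ¬ (j : ℕ) < (n : ℕ) := not_lt.2 hj
    simp [buildFull, buildR, h, h']
  · have h : ¬ (j : ℕ) < (n : ℕ) := not_lt.2 hj
    apply Fin.ext
    simp [buildFull, buildR, h, h']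

def splitEquiv : (∀ j : Fin (N+1), Fin (R j)) ≃
    Fin (R n) × (∀ j : {j : Fin (N+1) // (j : ℕ) < (n : ℕ)}, Fin (R j.1)) ×
      (∀ j : {j : Fin (N+1) // (n : ℕ) < (j : ℕ)}, Fin (R j.1)) where
  toFun r := (r n, fun j => r j.1, fun j => r j.1)
  invFun x := buildFull R n x.1 x.2.1 x.2.2
  left_inv r := by
    funext j
    by_cases h : (j : ℕ) < (n : ℕ)
    · simp [buildFull, h]
    · by_cases h' : (n : ℕ) < (j : ℕ)
      · simp [buildFull, h, h']
      · have hj : j = n := Fin.ext (le_antisymm (not_lt.1 h') (not_lt.1 h))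
        subst hj
        apply Fin.ext
        simp [buildFull, h, h']
  right_inv x := by
    obtain ⟨m, l, rt⟩ := x
    refine Prod.ext ?_ (Prod.ext ?_ ?_)
    · apply Fin.ext
      simp [buildFull]
    · funext j
      simp [buildFull, j.2]
    · funext j
      have h : ¬ ((j.1 : ℕ) < (n : ℕ)) := not_lt.2 (le_of_lt j.2)
      simp [buildFull, h, j.2]

lemma hcs (k : Fin N) (hk : (k : ℕ) < (n : ℕ)) : ((k.castSucc : Fin (N+1)) : ℕ) ≤ (n : ℕ) :=
  le_of_lt (by simpa using hk)

lemma hsc (k : Fin N) (hk : (k : ℕ) < (n : ℕ)) : ((k.succ : Fin (N+1)) : ℕ) ≤ (n : ℕ) := by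
  simpa using hk

lemma hcs' (k : Fin N) (hk : ¬ (k : ℕ) < (n : ℕ)) : (n : ℕ) ≤ ((k.castSucc : Fin (N+1)) : ℕ) := by
  simpa using not_lt.1 hk

lemma hsc' (k : Fin N) (hk : ¬ (k : ℕ) < (n : ℕ)) : (n : ℕ) ≤ ((k.succ : Fin (N+1)) : ℕ) := by
  simp only [Fin.val_succ]
  exact le_trans (not_lt.1 hk) (Nat.le_succ _)

lemma ttEntry_factor (I : Fin N → ℕ)
    (G : ∀ k : Fin N, Fin (R k.castSucc) → Fin (I k) → Fin (R k.succ) → ℝ)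
    (i : ∀ k : Fin N, Fin (I k)) :
    ttEntry I R G i =
      ∑ m : Fin (R n),
        (∑ l : ∀ j : {j : Fin (N+1) // (j : ℕ) < (n : ℕ)}, Fin (R j.1),
          ∏ k : {k : Fin N // (k : ℕ) < (n : ℕ)},
            G k.1 (buildL R n m l k.1.castSucc (hcs n k.1 k.2)) (i k.1)
              (buildL R n m l k.1.succ (hsc n k.1 k.2))) *
        (∑ rt : ∀ j : {j : Fin (N+1) // (n : ℕ) < (j : ℕ)}, Fin (R j.1),
          ∏ k : {k : Fin N // ¬ ((k : ℕ) < (n : ℕ))},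
            G k.1 (buildR R n m rt k.1.castSucc (hcs' n k.1 k.2)) (i k.1)
              (buildR R n m rt k.1.succ (hsc' n k.1 k.2))) := by
  rw [ttEntry, ← Equiv.sum_comp (splitEquiv R n).symm]
  rw [Fintype.sum_prod_type]
  refine Finset.sum_congr rfl fun m _ => ?_
  rw [Fintype.sum_prod_type, Finset.sum_mul_sum]
  refine Finset.sum_congr rfl fun l _ => ?_
  refine Finset.sum_congr rfl fun rt _ => ?_
  have : (splitEquiv R n).symm (m, l, rt) = buildFull R n m l rt := rfl
  rw [this]
  rw [← Fintype.prod_subtype_mul_prod_subtype (fun k : Fin N => (k : ℕ) < (n : ℕ))]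
  congr 1
  · refine Finset.prod_congr rfl fun k _ => ?_
    rw [buildFull_le R n m l rt k.1.castSucc (hcs n k.1 k.2),
        buildFull_le R n m l rt k.1.succ (hsc n k.1 k.2)]
  · refine Finset.prod_congr rfl fun k _ => ?_
    rw [buildFull_ge R n m l rt k.1.castSucc (hcs' n k.1 k.2),
        buildFull_ge R n m l rt k.1.succ (hsc' n k.1 k.2)]

end Aux

/-- **Minimality of TT ranks.** If `X` is in tensor-train format with ranks `R`, then for
every `1 ≤ n ≤ N − 1` the matrix rank of the `n`-th unfolding of `X` is at most `R n`. -/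

theorem unfolding_rank_le_tt_rank
    (N : ℕ) (hN : 1 ≤ N) (I : Fin N → ℕ) (hI : ∀ k, 0 < I k)
    (R : Fin (N + 1) → ℕ) (hR0 : R 0 = 1) (hRN : R (Fin.last N) = 1)
    (G : ∀ k : Fin N, Fin (R k.castSucc) → Fin (I k) → Fin (R k.succ) → ℝ)
    (X : (∀ k : Fin N, Fin (I k)) → ℝ)
    (hX : ∀ i, X i = ttEntry I R G i) :
    ∀ n : Fin (N + 1), 1 ≤ (n : ℕ) → (n : ℕ) ≤ N - 1 →
      (unfold I X (n : ℕ)).rank ≤ R n := by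
  intro n _ _
  set A : Matrix (∀ k : {k : Fin N // (k : ℕ) < (n : ℕ)}, Fin (I k.1)) (Fin (R n)) ℝ :=
    fun row m => ∑ l : ∀ j : {j : Fin (N+1) // (j : ℕ) < (n : ℕ)}, Fin (R j.1),
      ∏ k : {k : Fin N // (k : ℕ) < (n : ℕ)},
        G k.1 (buildL R n m l k.1.castSucc (hcs n k.1 k.2)) (row k)
          (buildL R n m l k.1.succ (hsc n k.1 k.2)) with hA
  set B : Matrix (Fin (R n)) (∀ k : {k : Fin N // (n : ℕ) ≤ (k : ℕ)}, Fin (I k.1)) ℝ :=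
    fun m col => ∑ rt : ∀ j : {j : Fin (N+1) // (n : ℕ) < (j : ℕ)}, Fin (R j.1),
      ∏ k : {k : Fin N // ¬ ((k : ℕ) < (n : ℕ))},
        G k.1 (buildR R n m rt k.1.castSucc (hcs' n k.1 k.2)) (col ⟨k.1, not_lt.1 k.2⟩)
          (buildR R n m rt k.1.succ (hsc' n k.1 k.2)) with hB
  have hfac : unfold I X (n : ℕ) = A * B := by
    funext row col
    show X (fun k => if h : (k : ℕ) < (n : ℕ) then row ⟨k, h⟩ else col ⟨k, le_of_not_gt h⟩) = _
    rw [hX, ttEntry_factor R n]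
    simp only [Matrix.mul_apply, hA, hB]
    refine Finset.sum_congr rfl fun m _ => ?_
    congr 1
    · refine Finset.sum_congr rfl fun l _ => Finset.prod_congr rfl fun k _ => ?_
      rw [dif_pos k.2]
    · refine Finset.sum_congr rfl fun rt _ => Finset.prod_congr rfl fun k _ => ?_
      rw [dif_neg k.2]
  calc (unfold I X (n : ℕ)).rank = (A * B).rank := by rw [hfac]
    _ ≤ A.rank := Matrix.rank_mul_le_left A B
    _ ≤ Fintype.card (Fin (R n)) := A.rank_le_card_width
    _ = R n := Fintype.card_fin _

end
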